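/- arXiv:0804.1026 — 4 statements merged into one kernel-verified Lean document; each statement's English description precedes it below -/
import Mathlib

section
/- Let $\{\lambda_p\}_{p\geq 1}$ be a non-increasing sequence of non-negative real numbers and let $\alpha>0$ with $\sum_{p\geq 1}\lambda_p^\alpha<\infty$. Then for any $\beta\geq\alpha$, $\sup_{\gamma>0}\ \gamma^\alpha \sum_{p=1}^\infty \lambda_p^\beta(\lambda_p+\gamma)^{-\beta} \leq 2\sum_{p=1}^\infty \lambda_p^\alpha$. -/
open scoped BigOperators

/-- For a non-increasing non-negative sequence `λ` with `∑ λ_p^α < ∞` and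
`β ≥ α`, for every `γ > 0` one has
`γ^α * ∑_p λ_p^β (λ_p+γ)^(-β) ≤ 2 ∑_p λ_p^α`. -/
theorem stmt_0 (lam : ℕ → ℝ) (hmono : Antitone lam) (hnonneg : ∀ p, 0 ≤ lam p)
    (α : ℝ) (hα : 0 < α) (hsum : Summable fun p => lam p ^ α)
    (β : ℝ) (hβ : α ≤ β) :
    ∀ γ : ℝ, 0 < γ →
      γ ^ α * ∑' p, lam p ^ β * (lam p + γ) ^ (-β : ℝ) ≤ 2 * ∑' p, lam p ^ α := by
  intro γ hγ
  have key : ∀ p, γ ^ α * (lam p ^ β * (lam p + γ) ^ (-β : ℝ)) ≤ lam p ^ α := by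
    intro p
    rcases eq_or_lt_of_le (hnonneg p) with h | h
    · rw [← h, Real.zero_rpow (by linarith : β ≠ 0), Real.zero_rpow hα.ne']
      simp
    · have hlg : 0 < lam p + γ := by linarith
      have e1 : lam p ^ β * (lam p + γ) ^ (-β : ℝ) = (lam p / (lam p + γ)) ^ β := by
        rw [Real.div_rpow (hnonneg p) hlg.le, Real.rpow_neg hlg.le, div_eq_mul_inv]
      rw [e1]
      have hr1 : lam p / (lam p + γ) ≤ 1 := by
        rw [div_le_one hlg]; linarith
      have hr0 : 0 < lam p / (lam p + γ) := div_pos h hlg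
      have h2 : (lam p / (lam p + γ)) ^ β ≤ (lam p / (lam p + γ)) ^ α :=
        Real.rpow_le_rpow_of_exponent_ge hr0 hr1 hβ
      calc γ ^ α * (lam p / (lam p + γ)) ^ β
          ≤ γ ^ α * (lam p / (lam p + γ)) ^ α :=
            mul_le_mul_of_nonneg_left h2 (Real.rpow_nonneg hγ.le α)
        _ = (γ * (lam p / (lam p + γ))) ^ α := (Real.mul_rpow hγ.le hr0.le).symm
        _ ≤ lam p ^ α := by
            apply Real.rpow_le_rpow (by positivity) _ hα.le
            rw [mul_comm, div_mul_eq_mul_div, div_le_iff₀ hlg]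
            nlinarith
  have hsum2 : Summable fun p => γ ^ α * (lam p ^ β * (lam p + γ) ^ (-β : ℝ)) := by
    apply Summable.of_nonneg_of_le (fun p => mul_nonneg (Real.rpow_nonneg hγ.le _) (mul_nonneg (Real.rpow_nonneg (hnonneg p) _) (Real.rpow_nonneg (by linarith [hnonneg p]) _))) key hsum
  rw [← tsum_mul_left]
  calc ∑' p, γ ^ α * (lam p ^ β * (lam p + γ) ^ (-β : ℝ))
      ≤ ∑' p, lam p ^ α := Summable.tsum_le_tsum key hsum2 hsum
    _ ≤ 2 * ∑' p, lam p ^ α := by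
        nlinarith [(tsum_nonneg (fun p => Real.rpow_nonneg (hnonneg p) α) : (0:ℝ) ≤ ∑' p, lam p ^ α)]
end

section
/- Let $S$ be a positive self-adjoint trace-class operator on a separable Hilbert space with eigenvalues $\{\lambda_p\}$ and eigenvectors $\{e_p\}$, and let $\gamma>0$. Define $d_1(T,\gamma)=\mathrm{Tr}((T+\gamma I)^{-1}T)$. If $\Delta$ is a self-adjoint trace-class perturbation with $\|(S+\gamma I)^{-1}\Delta\|<1$ and $\sum_{p=1}^\infty \|\Delta e_p\| < \gamma$, then $|d_1(S+\Delta,\gamma)-d_1(S,\gamma)| \leq \frac{\gamma^{-1}\sum_p\|\Delta e_p\|}{1-\gamma^{-1}\sum_p\|\Delta e_p\|}$. -/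
set_option maxHeartbeats 1000000


open RealInnerProductSpace

/-- perturbation bound for the degrees of freedom
`d₁(T,γ) = Tr((T+γI)⁻¹ T)`.  Here `S` is positive self-adjoint trace class with
eigenbasis `e` and eigenvalues `lam` (so `d₁(S,γ) = ∑_p λ_p/(λ_p+γ)`),
`Δ` is a self-adjoint trace-class perturbation, `R` is the inverse of `S+Δ+γI`
and `RS` the inverse of `S+γI`; under `‖(S+γI)⁻¹ Δ‖ < 1` and
`∑_p ‖Δ e_p‖ < γ` one has
`|d₁(S+Δ,γ) - d₁(S,γ)| ≤ (γ⁻¹ ∑_p ‖Δ e_p‖)/(1 - γ⁻¹ ∑_p ‖Δ e_p‖)`. -/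
theorem stmt_6
    {H : Type*} [NormedAddCommGroup H] [InnerProductSpace ℝ H] [CompleteSpace H]
    (S Δ : H →L[ℝ] H) (hS : IsSelfAdjoint S) (hΔ : IsSelfAdjoint Δ)
    (lam : ℕ → ℝ) (hlam : ∀ p, 0 ≤ lam p)
    (e : HilbertBasis ℕ ℝ H) (heig : ∀ p, S (e p) = lam p • e p)
    (htrS : Summable lam)
    (γ : ℝ) (hγ : 0 < γ)
    (RS : H →L[ℝ] H)
    (hRS : (S + γ • (1 : H →L[ℝ] H)) ∘L RS = 1 ∧ RS ∘L (S + γ • (1 : H →L[ℝ] H)) = 1)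
    (R : H →L[ℝ] H)
    (hR : (S + Δ + γ • (1 : H →L[ℝ] H)) ∘L R = 1 ∧ R ∘L (S + Δ + γ • (1 : H →L[ℝ] H)) = 1)
    (hop : ‖RS ∘L Δ‖ < 1)
    (hcarlS : Summable fun p => ‖Δ (e p)‖)
    (hcarl : (∑' p, ‖Δ (e p)‖) < γ)
    (htr' : Summable fun p : ℕ => |⟪(e p : H), (R ∘L (S + Δ)) (e p)⟫|) :
    |(∑' p : ℕ, ⟪(e p : H), (R ∘L (S + Δ)) (e p)⟫) - ∑' p : ℕ, lam p / (lam p + γ)| ≤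
      (γ⁻¹ * ∑' p, ‖Δ (e p)‖) / (1 - γ⁻¹ * ∑' p, ‖Δ (e p)‖) := by
  set t := ∑' p, ‖Δ (e p)‖ with ht_def
  have ht0 : 0 ≤ t := tsum_nonneg (fun p => norm_nonneg _)
  have htγ : t < γ := hcarl
  have hγt : 0 < γ - t := by linarith
  have hnorm_e : ∀ p, ‖(e p : H)‖ = 1 := fun p => e.orthonormal.1 p
  -- S is positive
  have hSsymm : ∀ x y : H, ⟪S x, y⟫ = ⟪x, S y⟫ :=
    (ContinuousLinearMap.isSelfAdjoint_iff_isSymmetric.mp hS)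
  have hSx : ∀ x : H, 0 ≤ ⟪x, S x⟫ := by
    intro x
    have h1 : ⟪x, S x⟫ = ∑' p, ⟪x, e p⟫ * ⟪(e p : H), S x⟫ :=
      (e.tsum_inner_mul_inner x (S x)).symm
    rw [h1]
    refine tsum_nonneg fun p => ?_
    have h2 : ⟪(e p : H), S x⟫ = lam p * ⟪x, e p⟫ := by
      rw [← hSsymm, heig p, inner_smul_left, real_inner_comm]
      simp
    rw [h2]
    nlinarith [hlam p, mul_self_nonneg (⟪x, e p⟫ : ℝ)]
  -- norm bound for Δ
  have hΔb : ∀ x : H, ‖Δ x‖ ≤ t * ‖x‖ := by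
    intro x
    have hx : HasSum (fun p => (⟪(e p : H), x⟫ : ℝ) • (e p : H)) x := by
      simpa [e.repr_apply_apply] using e.hasSum_repr x
    have hΔx : HasSum (fun p => (⟪(e p : H), x⟫ : ℝ) • Δ (e p)) (Δ x) := by
      simpa using hx.mapL Δ
    have hle : ∀ p, ‖(⟪(e p : H), x⟫ : ℝ) • Δ (e p)‖ ≤ ‖x‖ * ‖Δ (e p)‖ := by
      intro p
      rw [norm_smul]
      have h1 : ‖(⟪(e p : H), x⟫ : ℝ)‖ ≤ ‖x‖ := by
        rw [Real.norm_eq_abs]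
        calc |(⟪(e p : H), x⟫ : ℝ)| ≤ ‖(e p : H)‖ * ‖x‖ := abs_real_inner_le_norm _ _
        _ = ‖x‖ := by rw [hnorm_e p, one_mul]
      exact mul_le_mul_of_nonneg_right h1 (norm_nonneg _)
    have hsum : Summable (fun p => ‖(⟪(e p : H), x⟫ : ℝ) • Δ (e p)‖) :=
      Summable.of_nonneg_of_le (fun p => norm_nonneg _) hle (hcarlS.mul_left ‖x‖)
    calc ‖Δ x‖ = ‖∑' p, (⟪(e p : H), x⟫ : ℝ) • Δ (e p)‖ := by rw [hΔx.tsum_eq]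
    _ ≤ ∑' p, ‖(⟪(e p : H), x⟫ : ℝ) • Δ (e p)‖ := norm_tsum_le_tsum_norm hsum
    _ ≤ ∑' p, ‖x‖ * ‖Δ (e p)‖ := Summable.tsum_le_tsum hle hsum (hcarlS.mul_left ‖x‖)
    _ = ‖x‖ * t := by rw [tsum_mul_left]
    _ = t * ‖x‖ := mul_comm _ _
  -- norm bound for R
  have hRb : ∀ y : H, ‖R y‖ ≤ (γ - t)⁻¹ * ‖y‖ := by
    intro y
    have key : ∀ x : H, (γ - t) * ‖x‖ ≤ ‖(S + Δ + γ • (1 : H →L[ℝ] H)) x‖ := by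
      intro x
      have hSγ : γ * ‖x‖ ≤ ‖(S + γ • (1 : H →L[ℝ] H)) x‖ := by
        rcases eq_or_ne x 0 with rfl | hx0
        · simp
        · have hxpos : 0 < ‖x‖ := norm_pos_iff.mpr hx0
          have h1 : γ * ‖x‖ ^ 2 ≤ ⟪x, (S + γ • (1 : H →L[ℝ] H)) x⟫ := by
            have heq : ⟪x, (S + γ • (1 : H →L[ℝ] H)) x⟫ = ⟪x, S x⟫ + γ * ⟪x, x⟫ := by
              simp [inner_add_right, inner_smul_right]
            rw [heq, real_inner_self_eq_norm_sq]
            nlinarith [hSx x]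
          have h2 : ⟪x, (S + γ • (1 : H →L[ℝ] H)) x⟫ ≤ ‖x‖ * ‖(S + γ • (1 : H →L[ℝ] H)) x‖ :=
            real_inner_le_norm _ _
          nlinarith
      have hsplit : (S + Δ + γ • (1 : H →L[ℝ] H)) x
          = (S + γ • (1 : H →L[ℝ] H)) x + Δ x := by
        simp [ContinuousLinearMap.add_apply]
        abel
      have htri : ‖(S + γ • (1 : H →L[ℝ] H)) x‖ - ‖Δ x‖
          ≤ ‖(S + γ • (1 : H →L[ℝ] H)) x + Δ x‖ := by
        have h := norm_add_le ((S + γ • (1 : H →L[ℝ] H)) x + Δ x) (-(Δ x))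
        have h2 : (S + γ • (1 : H →L[ℝ] H)) x + Δ x + -(Δ x)
            = (S + γ • (1 : H →L[ℝ] H)) x := by abel
        rw [h2, norm_neg] at h
        linarith
      have := hΔb x
      rw [hsplit]
      nlinarith
    have h1 := key (R y)
    have h2 : (S + Δ + γ • (1 : H →L[ℝ] H)) (R y) = y := by
      have := congrArg (fun f : H →L[ℝ] H => f y) hR.1
      simpa using this
    rw [h2] at h1
    rw [inv_mul_eq_div, le_div_iff₀ hγt]
    linarith
  -- eigenvector property of RS
  have hRSe : ∀ p, RS (e p) = (lam p + γ)⁻¹ • (e p : H) := by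
    intro p
    have hpos : 0 < lam p + γ := by linarith [hlam p]
    have h1 : (S + γ • (1 : H →L[ℝ] H)) (e p) = (lam p + γ) • (e p : H) := by
      simp [heig p, add_smul]
    have h2 : RS ((lam p + γ) • (e p : H)) = e p := by
      rw [← h1]
      have := congrArg (fun f : H →L[ℝ] H => f (e p)) hRS.2
      simpa using this
    rw [map_smul] at h2
    calc RS (e p) = (lam p + γ)⁻¹ • ((lam p + γ) • RS (e p)) := by
          rw [smul_smul, inv_mul_cancel₀ hpos.ne', one_smul]
    _ = (lam p + γ)⁻¹ • (e p : H) := by rw [h2]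
  -- resolvent identity pointwise
  have hres : ∀ x : H, RS x = R x + R (Δ (RS x)) := by
    intro x
    have h2 : (S + γ • (1 : H →L[ℝ] H)) (RS x) = x := by
      have := congrArg (fun f : H →L[ℝ] H => f x) hRS.1
      simpa using this
    have h1 : (S + Δ + γ • (1 : H →L[ℝ] H)) (RS x) = x + Δ (RS x) := by
      have hsplit : (S + Δ + γ • (1 : H →L[ℝ] H)) (RS x)
          = (S + γ • (1 : H →L[ℝ] H)) (RS x) + Δ (RS x) := by
        simp [ContinuousLinearMap.add_apply]; abel
      rw [hsplit, h2]
    have h3 : R ((S + Δ + γ • (1 : H →L[ℝ] H)) (RS x)) = RS x := by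
      have := congrArg (fun f : H →L[ℝ] H => f (RS x)) hR.2
      simpa using this
    rw [h1, map_add] at h3
    exact h3.symm
  -- per-term identity
  have hterm : ∀ p, ⟪(e p : H), (R ∘L (S + Δ)) (e p)⟫ - lam p / (lam p + γ)
      = γ * ((lam p + γ)⁻¹ * ⟪(e p : H), R (Δ (e p))⟫) := by
    intro p
    have hpos : 0 < lam p + γ := by linarith [hlam p]
    -- (R ∘ (S+Δ)) e_p = e_p - γ • R e_p
    have hA : (R ∘L (S + Δ)) (e p) = (e p : H) - γ • R (e p) := by
      have hc : R ((S + Δ + γ • (1 : H →L[ℝ] H)) (e p)) = e p := by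
        have := congrArg (fun f : H →L[ℝ] H => f (e p)) hR.2
        simpa using this
      have hsplit : (S + Δ + γ • (1 : H →L[ℝ] H)) (e p)
          = (S + Δ) (e p) + γ • (e p : H) := by
        simp [ContinuousLinearMap.add_apply]
      rw [hsplit, map_add, map_smul] at hc
      rw [ContinuousLinearMap.comp_apply, eq_sub_iff_add_eq]
      exact hc
    -- R e_p from resolvent identity
    have hB : R (e p) = (lam p + γ)⁻¹ • (e p : H) - (lam p + γ)⁻¹ • R (Δ (e p)) := by
      have h := hres (e p)
      rw [hRSe p, map_smul, map_smul] at h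
      have : R (e p) = (lam p + γ)⁻¹ • (e p : H) - (lam p + γ)⁻¹ • R (Δ (e p)) := by
        rw [h]; abel
      exact this
    have hee : ⟪(e p : H), (e p : H)⟫ = 1 := by
      rw [real_inner_self_eq_norm_sq, hnorm_e p]; norm_num
    rw [hA, hB]
    rw [inner_sub_right, inner_smul_right, inner_sub_right, inner_smul_right,
      inner_smul_right, hee]
    have hdiv : lam p / (lam p + γ) = 1 - γ * (lam p + γ)⁻¹ := by
      field_simp
      ring
    rw [hdiv]
    ring
  -- bound per term
  have hbound : ∀ p, |⟪(e p : H), (R ∘L (S + Δ)) (e p)⟫ - lam p / (lam p + γ)|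
      ≤ (γ - t)⁻¹ * ‖Δ (e p)‖ := by
    intro p
    have hpos : 0 < lam p + γ := by linarith [hlam p]
    rw [hterm p]
    have hc : |⟪(e p : H), R (Δ (e p))⟫| ≤ (γ - t)⁻¹ * ‖Δ (e p)‖ := by
      calc |⟪(e p : H), R (Δ (e p))⟫| ≤ ‖(e p : H)‖ * ‖R (Δ (e p))‖ :=
            abs_real_inner_le_norm _ _
      _ = ‖R (Δ (e p))‖ := by rw [hnorm_e p, one_mul]
      _ ≤ (γ - t)⁻¹ * ‖Δ (e p)‖ := hRb _
    have hfrac : γ * (lam p + γ)⁻¹ ≤ 1 := by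
      have hinv : (lam p + γ) * (lam p + γ)⁻¹ = 1 := mul_inv_cancel₀ hpos.ne'
      nlinarith [mul_nonneg (hlam p) (inv_nonneg.mpr hpos.le)]
    calc |γ * ((lam p + γ)⁻¹ * ⟪(e p : H), R (Δ (e p))⟫)|
        = (γ * (lam p + γ)⁻¹) * |⟪(e p : H), R (Δ (e p))⟫| := by
          rw [abs_mul, abs_mul, abs_of_pos hγ, abs_of_pos (inv_pos.mpr hpos)]; ring
    _ ≤ 1 * ((γ - t)⁻¹ * ‖Δ (e p)‖) :=
        mul_le_mul hfrac hc (abs_nonneg _) zero_le_one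
    _ = (γ - t)⁻¹ * ‖Δ (e p)‖ := one_mul _
  -- summabilities
  have hf : Summable (fun p : ℕ => ⟪(e p : H), (R ∘L (S + Δ)) (e p)⟫) :=
    summable_abs_iff.mp htr'
  have hg : Summable (fun p : ℕ => lam p / (lam p + γ)) := by
    refine Summable.of_nonneg_of_le (fun p => div_nonneg (hlam p) (by linarith [hlam p]))
      (fun p => ?_) (htrS.mul_right γ⁻¹)
    rw [div_eq_mul_inv]
    refine mul_le_mul_of_nonneg_left ?_ (hlam p)
    exact inv_anti₀ hγ (by linarith [hlam p])
  have hsub : Summable (fun p : ℕ =>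
      ⟪(e p : H), (R ∘L (S + Δ)) (e p)⟫ - lam p / (lam p + γ)) := hf.sub hg
  have habs : Summable (fun p : ℕ =>
      |⟪(e p : H), (R ∘L (S + Δ)) (e p)⟫ - lam p / (lam p + γ)|) := hsub.abs
  rw [← Summable.tsum_sub hf hg]
  have h1 : |∑' p : ℕ, (⟪(e p : H), (R ∘L (S + Δ)) (e p)⟫ - lam p / (lam p + γ))|
      ≤ ∑' p : ℕ, |⟪(e p : H), (R ∘L (S + Δ)) (e p)⟫ - lam p / (lam p + γ)| := by
    have h := norm_tsum_le_tsum_norm (f := fun p : ℕ =>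
      ⟪(e p : H), (R ∘L (S + Δ)) (e p)⟫ - lam p / (lam p + γ))
      (by simpa only [Real.norm_eq_abs] using habs)
    simpa only [Real.norm_eq_abs] using h
  have h2 : (∑' p : ℕ, |⟪(e p : H), (R ∘L (S + Δ)) (e p)⟫ - lam p / (lam p + γ)|)
      ≤ (γ - t)⁻¹ * t := by
    calc (∑' p : ℕ, |⟪(e p : H), (R ∘L (S + Δ)) (e p)⟫ - lam p / (lam p + γ)|)
        ≤ ∑' p : ℕ, (γ - t)⁻¹ * ‖Δ (e p)‖ :=
          Summable.tsum_le_tsum hbound habs (hcarlS.mul_left _)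
    _ = (γ - t)⁻¹ * t := by rw [tsum_mul_left]
  have heq : (γ - t)⁻¹ * t = (γ⁻¹ * t) / (1 - γ⁻¹ * t) := by
    have h3 : (1 : ℝ) - γ⁻¹ * t ≠ 0 := by
      have : γ⁻¹ * t < 1 := by
        rw [inv_mul_lt_iff₀ hγ, mul_one]; exact htγ
      linarith
    field_simp
  linarith [h1, h2, heq ▸ le_refl ((γ - t)⁻¹ * t)]
end

section
/- With the notation of the preceding context (two probabilities $\mathbb{P}_1,\mathbb{P}_2$ with densities relative to a dominating $\mathbb{Q}$, covariance operator $\Sigma$ of $\mathbb{Q}$ with positive eigenpairs $\{(\lambda_p,e_p)\}$), the inequality $\sum_{p=1}^\infty \lambda_p^{-1}\langle e_p,\mu_2-\mu_1\rangle_{\mathcal{H}}^2 \leq \|d\mathbb{P}_1/d\mathbb{Q} - d\mathbb{P}_2/d\mathbb{Q}\|_{L^2(\mathbb{Q})}^2$ holds (without assuming density of the RKHS in $L^2(\mathbb{Q})$). -/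
open MeasureTheory RealInnerProductSpace
open scoped ENNReal

/-- Bessel-type inequality
`∑_p λ_p⁻¹ ⟨e_p, μ₂-μ₁⟩² ≤ ‖dP₁/dQ - dP₂/dQ‖²_{L²(Q)}`, without assuming density of
the RKHS in `L²(Q)`; stated in `ℝ≥0∞` so that no summability/integrability assumptions
are needed. -/
theorem stmt_10
    {X : Type*} [MeasurableSpace X] (Q : Measure X) [IsProbabilityMeasure Q]
    {H : Type*} [NormedAddCommGroup H] [InnerProductSpace ℝ H] [CompleteSpace H]
    (Φ : X → H) (M : ℝ) (hbdd : ∀ x, ‖Φ x‖ ^ 2 ≤ M)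
    (hmeas : ∀ f : H, Measurable fun x => ⟪f, Φ x⟫)
    (Cov : H →L[ℝ] H)
    (hcov : ∀ f g : H, ⟪f, Cov g⟫ =
      ∫ x, (⟪f, Φ x⟫ - ∫ y, ⟪f, Φ y⟫ ∂Q) * (⟪g, Φ x⟫ - ∫ y, ⟪g, Φ y⟫ ∂Q) ∂Q)
    (lam : ℕ → ℝ) (hpos : ∀ p, 0 < lam p)
    (e : ℕ → H) (hon : Orthonormal ℝ e) (heig : ∀ p, Cov (e p) = lam p • e p)
    (g1 g2 : X → ℝ) (hg1 : Measurable g1) (hg2 : Measurable g2)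
    (hg1nn : ∀ x, 0 ≤ g1 x) (hg2nn : ∀ x, 0 ≤ g2 x)
    (P1 P2 : Measure X) [IsProbabilityMeasure P1] [IsProbabilityMeasure P2]
    (hP1 : P1 = Q.withDensity fun x => ENNReal.ofReal (g1 x))
    (hP2 : P2 = Q.withDensity fun x => ENNReal.ofReal (g2 x))
    (μ1 μ2 : H)
    (hμ1 : ∀ f : H, ⟪f, μ1⟫ = ∫ x, ⟪f, Φ x⟫ ∂P1)
    (hμ2 : ∀ f : H, ⟪f, μ2⟫ = ∫ x, ⟪f, Φ x⟫ ∂P2) :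
    (∑' p, ENNReal.ofReal ((lam p)⁻¹ * ⟪e p, μ2 - μ1⟫ ^ 2)) ≤
      ∫⁻ x, ENNReal.ofReal ((g1 x - g2 x) ^ 2) ∂Q := by
  by_cases htop : (∫⁻ x, ENNReal.ofReal ((g1 x - g2 x) ^ 2) ∂Q) = ⊤
  · rw [htop]; exact le_top
  -- X is nonempty, hence M ≥ 0
  have hX : Nonempty X := by
    by_contra hc
    rw [not_nonempty_iff] at hc
    have := measure_univ (μ := Q)
    rw [Set.univ_eq_empty_iff.2 hc, measure_empty] at this
    exact zero_ne_one this
  have hM : 0 ≤ M := le_trans (sq_nonneg _) (hbdd (Classical.arbitrary X))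
  have hΦ : ∀ x, ‖Φ x‖ ≤ Real.sqrt M := fun x =>
    (Real.le_sqrt (norm_nonneg _) hM).2 (hbdd x)
  have hAbd : ∀ (f : H) (x : X), |⟪f, Φ x⟫| ≤ ‖f‖ * Real.sqrt M := fun f x =>
    le_trans (abs_real_inner_le_norm f (Φ x))
      (mul_le_mul_of_nonneg_left (hΦ x) (norm_nonneg f))
  -- the difference of densities
  set h : X → ℝ := fun x => g1 x - g2 x with hh
  have hhmeas : Measurable h := hg1.sub hg2
  have hsq_int : Integrable (fun x => h x ^ 2) Q := by
    refine ⟨(hhmeas.pow_const 2).aestronglyMeasurable, ?_⟩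
    rw [hasFiniteIntegral_iff_ofReal (Filter.Eventually.of_forall fun x => sq_nonneg _)]
    exact lt_top_iff_ne_top.2 htop
  have hL2 : MemLp h 2 Q := (memLp_two_iff_integrable_sq hhmeas.aestronglyMeasurable).2 hsq_int
  have hhint : Integrable h Q := hL2.integrable one_le_two
  -- densities integrate to 1
  have hlint1 : (∫⁻ x, ENNReal.ofReal (g1 x) ∂Q) = 1 := by
    have : P1 Set.univ = 1 := measure_univ
    rwa [hP1, withDensity_apply _ MeasurableSet.univ, setLIntegral_univ] at this
  have hlint2 : (∫⁻ x, ENNReal.ofReal (g2 x) ∂Q) = 1 := by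
    have : P2 Set.univ = 1 := measure_univ
    rwa [hP2, withDensity_apply _ MeasurableSet.univ, setLIntegral_univ] at this
  have hg1int : Integrable g1 Q := by
    refine ⟨hg1.aestronglyMeasurable, ?_⟩
    rw [hasFiniteIntegral_iff_ofReal (Filter.Eventually.of_forall hg1nn), hlint1]
    exact ENNReal.one_lt_top
  have hg2int : Integrable g2 Q := by
    refine ⟨hg2.aestronglyMeasurable, ?_⟩
    rw [hasFiniteIntegral_iff_ofReal (Filter.Eventually.of_forall hg2nn), hlint2]
    exact ENNReal.one_lt_top
  have hint_g1 : ∫ x, g1 x ∂Q = 1 := by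
    rw [integral_eq_lintegral_of_nonneg_ae (Filter.Eventually.of_forall hg1nn)
      hg1.aestronglyMeasurable, hlint1, ENNReal.toReal_one]
  have hint_g2 : ∫ x, g2 x ∂Q = 1 := by
    rw [integral_eq_lintegral_of_nonneg_ae (Filter.Eventually.of_forall hg2nn)
      hg2.aestronglyMeasurable, hlint2, ENNReal.toReal_one]
  have hint_h : ∫ x, h x ∂Q = 0 := by
    rw [hh, integral_sub hg1int hg2int, hint_g1, hint_g2, sub_self]
  -- mean embedding identities over Q
  have key1 : ∀ f : H, ⟪f, μ1⟫ = ∫ x, g1 x * ⟪f, Φ x⟫ ∂Q := by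
    intro f
    rw [hμ1 f, hP1]
    have : (fun x => ENNReal.ofReal (g1 x)) = fun x => ((g1 x).toNNReal : ℝ≥0∞) := rfl
    rw [this, integral_withDensity_eq_integral_smul hg1.real_toNNReal]
    refine integral_congr_ae (Filter.Eventually.of_forall fun x => ?_)
    simp [NNReal.smul_def, Real.coe_toNNReal _ (hg1nn x)]
  have key2 : ∀ f : H, ⟪f, μ2⟫ = ∫ x, g2 x * ⟪f, Φ x⟫ ∂Q := by
    intro f
    rw [hμ2 f, hP2]
    have : (fun x => ENNReal.ofReal (g2 x)) = fun x => ((g2 x).toNNReal : ℝ≥0∞) := rfl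
    rw [this, integral_withDensity_eq_integral_smul hg2.real_toNNReal]
    refine integral_congr_ae (Filter.Eventually.of_forall fun x => ?_)
    simp [NNReal.smul_def, Real.coe_toNNReal _ (hg2nn x)]
  have hinner : ∀ f : H, ∫ x, ⟪f, Φ x⟫ * h x ∂Q = -⟪f, μ2 - μ1⟫ := by
    intro f
    have hb : ∃ C, ∀ x, ‖⟪f, Φ x⟫‖ ≤ C :=
      ⟨‖f‖ * Real.sqrt M, fun x => by rw [Real.norm_eq_abs]; exact hAbd f x⟩
    have h1 : Integrable (fun x => ⟪f, Φ x⟫ * g1 x) Q :=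
      hg1int.bdd_mul (hmeas f).aestronglyMeasurable (Filter.Eventually.of_forall hb.choose_spec)
    have h2 : Integrable (fun x => ⟪f, Φ x⟫ * g2 x) Q :=
      hg2int.bdd_mul (hmeas f).aestronglyMeasurable (Filter.Eventually.of_forall hb.choose_spec)
    have : (fun x => ⟪f, Φ x⟫ * h x)
        = fun x => ⟪f, Φ x⟫ * g1 x - ⟪f, Φ x⟫ * g2 x := by
      funext x; simp [hh]; ring
    rw [this, integral_sub h1 h2]
    have e1 : ∫ x, ⟪f, Φ x⟫ * g1 x ∂Q = ⟪f, μ1⟫ := by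
      rw [key1 f]; exact integral_congr_ae (Filter.Eventually.of_forall fun x => mul_comm _ _)
    have e2 : ∫ x, ⟪f, Φ x⟫ * g2 x ∂Q = ⟪f, μ2⟫ := by
      rw [key2 f]; exact integral_congr_ae (Filter.Eventually.of_forall fun x => mul_comm _ _)
    rw [e1, e2, inner_sub_right]; ring
  -- the orthonormal system in L²(Q)
  set fp : ℕ → X → ℝ :=
    fun p x => (Real.sqrt (lam p))⁻¹ * (⟪e p, Φ x⟫ - ∫ y, ⟪e p, Φ y⟫ ∂Q) with hfp
  have hfpmeas : ∀ p, Measurable (fp p) := fun p =>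
    ((hmeas (e p)).sub_const _).const_mul _
  have hfpL2 : ∀ p, MemLp (fp p) 2 Q := by
    intro p
    refine (memLp_top_of_bound (hfpmeas p).aestronglyMeasurable
      (|(Real.sqrt (lam p))⁻¹| * (‖e p‖ * Real.sqrt M + |∫ y, ⟪e p, Φ y⟫ ∂Q|))
      (Filter.Eventually.of_forall fun x => ?_)).mono_exponent le_top
    rw [hfp]
    simp only [Real.norm_eq_abs, abs_mul]
    refine mul_le_mul_of_nonneg_left ?_ (abs_nonneg _)
    exact le_trans (abs_sub _ _) (add_le_add (hAbd (e p) x) le_rfl)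
  have hip : ∀ p q, ∫ x, fp p x * fp q x ∂Q
      = (Real.sqrt (lam p))⁻¹ * (Real.sqrt (lam q))⁻¹ * (lam q * ⟪e p, e q⟫) := by
    intro p q
    have : (fun x => fp p x * fp q x) = fun x =>
        ((Real.sqrt (lam p))⁻¹ * (Real.sqrt (lam q))⁻¹) *
          ((⟪e p, Φ x⟫ - ∫ y, ⟪e p, Φ y⟫ ∂Q) * (⟪e q, Φ x⟫ - ∫ y, ⟪e q, Φ y⟫ ∂Q)) := by
      funext x; rw [hfp]; ring
    rw [this, integral_const_mul, ← hcov (e p) (e q), heig q, real_inner_smul_right]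
  -- inner products in L² are integrals
  set v : ℕ → Lp ℝ 2 Q := fun p => (hfpL2 p).toLp (fp p) with hv
  have hvinner : ∀ p q, ⟪v p, v q⟫ = ∫ x, fp p x * fp q x ∂Q := by
    intro p q
    rw [hv, L2.inner_def]
    refine integral_congr_ae ?_
    filter_upwards [(hfpL2 p).coeFn_toLp, (hfpL2 q).coeFn_toLp] with x hx hy
    rw [hx, hy, RCLike.inner_apply, conj_trivial, mul_comm]
  have hortho : Orthonormal ℝ v := by
    rw [orthonormal_iff_ite]
    intro p q
    rw [hvinner p q, hip p q, orthonormal_iff_ite.mp hon p q]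
    by_cases hpq : p = q
    · subst hpq
      have hone : (if p = p then (1:ℝ) else 0) = 1 := if_pos rfl
      rw [hone, mul_one, ← mul_inv, Real.mul_self_sqrt (hpos p).le, inv_mul_cancel₀ (hpos p).ne']
    · simp [hpq]
  set F : Lp ℝ 2 Q := hL2.toLp h with hF
  have hvF : ∀ p, ⟪v p, F⟫ = -((Real.sqrt (lam p))⁻¹ * ⟪e p, μ2 - μ1⟫) := by
    intro p
    have hi : ⟪v p, F⟫ = ∫ x, fp p x * h x ∂Q := by
      rw [hv, hF, L2.inner_def]
      refine integral_congr_ae ?_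
      filter_upwards [(hfpL2 p).coeFn_toLp, hL2.coeFn_toLp] with x hx hy
      rw [hx, hy, RCLike.inner_apply, conj_trivial, mul_comm]
    have hb : ∃ C, ∀ x, ‖⟪e p, Φ x⟫‖ ≤ C :=
      ⟨‖e p‖ * Real.sqrt M, fun x => by rw [Real.norm_eq_abs]; exact hAbd (e p) x⟩
    have hAh : Integrable (fun x => ⟪e p, Φ x⟫ * h x) Q :=
      hhint.bdd_mul (hmeas (e p)).aestronglyMeasurable (Filter.Eventually.of_forall hb.choose_spec)
    have hmh : Integrable (fun x => (∫ y, ⟪e p, Φ y⟫ ∂Q) * h x) Q := hhint.const_mul _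
    have : (fun x => fp p x * h x) = fun x =>
        (Real.sqrt (lam p))⁻¹ *
          (⟪e p, Φ x⟫ * h x - (∫ y, ⟪e p, Φ y⟫ ∂Q) * h x) := by
      funext x; rw [hfp]; ring
    rw [hi, this, integral_const_mul, integral_sub hAh hmh, integral_const_mul, hint_h,
      mul_zero, sub_zero, hinner (e p)]
    ring
  -- Bessel's inequality, finite sums
  have hbessel : ∀ s : Finset ℕ,
      (∑ p ∈ s, ENNReal.ofReal ((lam p)⁻¹ * ⟪e p, μ2 - μ1⟫ ^ 2)) ≤
        ∫⁻ x, ENNReal.ofReal ((g1 x - g2 x) ^ 2) ∂Q := by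
    intro s
    have hBe : ∑ p ∈ s, ‖⟪v p, F⟫‖ ^ 2 ≤ ‖F‖ ^ 2 :=
      hortho.sum_inner_products_le F
    have heach : ∀ p, ‖⟪v p, F⟫‖ ^ 2 = (lam p)⁻¹ * ⟪e p, μ2 - μ1⟫ ^ 2 := by
      intro p
      rw [hvF p, norm_neg, Real.norm_eq_abs, sq_abs, mul_pow, inv_pow,
        Real.sq_sqrt (hpos p).le]
    have hnn : ∀ p, 0 ≤ (lam p)⁻¹ * ⟪e p, μ2 - μ1⟫ ^ 2 := fun p =>
      mul_nonneg (inv_nonneg.2 (hpos p).le) (sq_nonneg _)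
    have hFnorm : ‖F‖ ^ 2 = ∫ x, h x ^ 2 ∂Q := by
      rw [← real_inner_self_eq_norm_sq, hF, L2.inner_def]
      refine integral_congr_ae ?_
      filter_upwards [hL2.coeFn_toLp] with x hx
      rw [hx, RCLike.inner_apply, conj_trivial, sq]
    have h3 : ENNReal.ofReal (∫ x, h x ^ 2 ∂Q) = ∫⁻ x, ENNReal.ofReal ((g1 x - g2 x) ^ 2) ∂Q := by
      rw [integral_eq_lintegral_of_nonneg_ae (Filter.Eventually.of_forall fun x => sq_nonneg _)
        (hhmeas.pow_const 2).aestronglyMeasurable, ENNReal.ofReal_toReal htop]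
    calc (∑ p ∈ s, ENNReal.ofReal ((lam p)⁻¹ * ⟪e p, μ2 - μ1⟫ ^ 2))
        = ENNReal.ofReal (∑ p ∈ s, (lam p)⁻¹ * ⟪e p, μ2 - μ1⟫ ^ 2) :=
          (ENNReal.ofReal_sum_of_nonneg fun p _ => hnn p).symm
      _ ≤ ENNReal.ofReal (‖F‖ ^ 2) := by
          refine ENNReal.ofReal_le_ofReal ?_
          calc (∑ p ∈ s, (lam p)⁻¹ * ⟪e p, μ2 - μ1⟫ ^ 2)
              = ∑ p ∈ s, ‖⟪v p, F⟫‖ ^ 2 := by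
                refine Finset.sum_congr rfl fun p _ => (heach p).symm
            _ ≤ ‖F‖ ^ 2 := hBe
      _ = ∫⁻ x, ENNReal.ofReal ((g1 x - g2 x) ^ 2) ∂Q := by rw [hFnorm, h3]
  rw [ENNReal.tsum_eq_iSup_sum]
  exact iSup_le hbessel
end

section
/- Let $\mu_i\leq e^{-\delta i}$ for $i\geq 1$ and $\delta>0$, and consider the multiset of products $\{\mu_{i_1}\cdots\mu_{i_d} : i_1,\dots,i_d\geq 1\}$ arranged in non-increasing order as $\lambda_1\geq\lambda_2\geq\cdots$. Then $\lambda_n \leq e^{-\delta n^{1/d}}$ for all $n\geq 1$. -/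
open scoped BigOperators

/-- if `μ_i ≤ e^{-δ i}` (with `μ_i ≥ 0`) and `λ` is a non-increasing
enumeration (via a bijection `σ : ℕ ≃ (Fin d → ℕ)`, positive indices `σ n j + 1`) of the
multiset of `d`-fold products `μ_{i₁} ⋯ μ_{i_d}`, then the `n`-th largest value
satisfies `λ_n ≤ e^{-δ n^{1/d}}` (here `λ` is 0-indexed, so `λ (n-1) ≤ e^{-δ n^{1/d}}`). -/
theorem stmt_19 (d : ℕ) (hd : 1 ≤ d) (δ : ℝ) (hδ : 0 < δ)
    (μ : ℕ → ℝ) (hμnn : ∀ i, 0 ≤ μ i)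
    (hμ : ∀ i : ℕ, 1 ≤ i → μ i ≤ Real.exp (-δ * i))
    (σ : ℕ ≃ (Fin d → ℕ))
    (lam : ℕ → ℝ) (hlam : ∀ n, lam n = ∏ j : Fin d, μ (σ n j + 1))
    (hmono : Antitone lam) :
    ∀ n : ℕ, 1 ≤ n → lam (n - 1) ≤ Real.exp (-δ * (n : ℝ) ^ (1 / (d : ℝ))) := by
  intro n hn
  have hd0 : (d : ℝ) ≠ 0 := by positivity
  set r : ℝ := (n : ℝ) ^ (1 / (d : ℝ)) with hrdef
  have hn1 : (1 : ℝ) ≤ (n : ℝ) := by exact_mod_cast hn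
  have hr1 : (1 : ℝ) ≤ r := Real.one_le_rpow hn1 (by positivity)
  have hrd : r ^ d = (n : ℝ) := by
    rw [hrdef, ← Real.rpow_natCast ((n:ℝ) ^ (1/(d:ℝ))) d, ← Real.rpow_mul (by positivity),
      one_div_mul_cancel hd0, Real.rpow_one]
  -- Key: some m < n has exponent sum ≥ r
  have key : ∃ m < n, r ≤ ((∑ j : Fin d, (σ m j + 1) : ℕ) : ℝ) := by
    by_contra h
    push_neg at h
    set B : ℕ := ⌈r⌉₊ - 1 with hB
    have hceil1 : 1 ≤ ⌈r⌉₊ := Nat.one_le_ceil_iff.mpr (by linarith)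
    have hbound : ∀ m < n, ∀ j : Fin d, σ m j < B := by
      intro m hm j
      have h1 : σ m j + 1 ≤ ∑ j' : Fin d, (σ m j' + 1) :=
        Finset.single_le_sum (f := fun j' : Fin d => σ m j' + 1) (fun _ _ => Nat.zero_le _) (Finset.mem_univ j)
      have h2 : ((σ m j + 1 : ℕ) : ℝ) < r := lt_of_le_of_lt (by exact_mod_cast h1) (h m hm)
      have h3 : σ m j + 1 < ⌈r⌉₊ := by
        have : ((σ m j + 1 : ℕ) : ℝ) < (⌈r⌉₊ : ℝ) := lt_of_lt_of_le h2 (Nat.le_ceil r)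
        exact_mod_cast this
      omega
    -- injection Fin n → (Fin d → Fin B)
    have hinj : Function.Injective
        (fun m : Fin n => fun j : Fin d => (⟨σ m j, hbound m m.2 j⟩ : Fin B)) := by
      intro a b hab
      have : σ a = σ b := by
        funext j
        have := congrFun hab j
        exact_mod_cast congrArg Fin.val this
      exact Fin.ext (σ.injective this)
    have hcard : n ≤ B ^ d := by
      have := Fintype.card_le_of_injective _ hinj
      simpa [Fintype.card_fin, Fintype.card_fun] using this
    have hBr : (B : ℝ) < r := by
      have h1 : (⌈r⌉₊ : ℝ) < r + 1 := Nat.ceil_lt_add_one (by linarith)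
      have h2 : (B : ℝ) = (⌈r⌉₊ : ℝ) - 1 := by
        rw [hB]; push_cast [hceil1]; ring
      linarith
    have hlt : (B : ℝ) ^ d < r ^ d := by
      apply pow_lt_pow_left₀ hBr (by positivity)
      omega
    rw [hrd] at hlt
    have : (n : ℝ) ≤ ((B ^ d : ℕ) : ℝ) := by exact_mod_cast hcard
    push_cast at this
    linarith
  obtain ⟨m, hm, hSm⟩ := key
  have hstep : lam (n - 1) ≤ lam m := hmono (by omega)
  refine hstep.trans ?_
  rw [hlam m]
  have hprod : ∏ j : Fin d, μ (σ m j + 1) ≤ ∏ j : Fin d, Real.exp (-δ * ((σ m j + 1 : ℕ) : ℝ)) := by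
    apply Finset.prod_le_prod (fun j _ => hμnn _) (fun j _ => hμ _ (by omega))
  refine hprod.trans ?_
  rw [← Real.exp_sum]
  apply Real.exp_le_exp.mpr
  have hsum : ∑ j : Fin d, -δ * ((σ m j + 1 : ℕ) : ℝ)
      = -δ * ((∑ j : Fin d, (σ m j + 1) : ℕ) : ℝ) := by
    push_cast
    rw [← Finset.mul_sum]
  rw [hsum]
  have hδ' : -δ ≤ 0 := by linarith
  nlinarith [hSm, hδ.le]
end
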